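/- Let X₁, …, Xₙ (n ≥ 2) be i.i.d. nonnegative random variables with continuous distribution F whose tail is regularly varying with index -1/ξ, ξ > 0. Then the risk concentration C(α) = VaR_α(X₁+⋯+Xₙ) / (n · VaR_α(X₁)) converges to n^{ξ-1} as α → 1. -/

import Mathlib

open Filter Topology Set MeasureTheory ProbabilityTheory
open scoped ENNReal

set_option maxHeartbeats 1600000 in
/-- For `X₁, …, Xₙ` (`n ≥ 2`) i.i.d. nonnegative random variables with continuous
distribution `F` whose tail is regularly varying with index `-1/ξ`, `ξ > 0`, the risk
concentration `C(α) = VaR_α(X₁+⋯+Xₙ)/(n · VaR_α(X₁))` converges to `n^(ξ-1)` as `α → 1⁻`. -/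
theorem stmt2 {Ω : Type*} [MeasureSpace Ω] [IsProbabilityMeasure (ℙ : Measure Ω)]
    (n : ℕ) (hn : 2 ≤ n) (X : Fin n → Ω → ℝ)
    (hmeas : ∀ i, Measurable (X i))
    (hnonneg : ∀ i ω, 0 ≤ X i ω)
    (hindep : iIndepFun X ℙ)
    (F G : ℝ → ℝ)
    (hident : ∀ i x, ℙ {ω | X i ω ≤ x} = ℙ {ω | X ⟨0, by omega⟩ ω ≤ x})
    (hF : ∀ x, F x = (ℙ {ω | X ⟨0, by omega⟩ ω ≤ x}).toReal)
    (hG : ∀ x, G x = (ℙ {ω | (∑ i, X i ω) ≤ x}).toReal)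
    (hcont : Continuous F)
    (ξ : ℝ) (hξ : 0 < ξ)
    (hRV : ∀ x > (0:ℝ), Tendsto (fun t => (1 - F (t * x)) / (1 - F t)) atTop
      (𝓝 (x ^ (-1/ξ)))) :
    Tendsto (fun α => sInf {x : ℝ | α ≤ G x} / ((n : ℝ) * sInf {x : ℝ | α ≤ F x}))
      (𝓝[<] (1:ℝ)) (𝓝 ((n : ℝ) ^ (ξ - 1))) := by
  have hnpos : 0 < n := by omega
  have hn0 : (0:ℝ) < n := by exact_mod_cast hnpos
  haveI : Nonempty (Fin n) := ⟨⟨0, by omega⟩⟩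
  set i0 : Fin n := ⟨0, by omega⟩ with hi0
  -- measurability of basic sets
  have mIic : ∀ (i : Fin n) (x : ℝ), MeasurableSet {ω | X i ω ≤ x} := fun i x =>
    (hmeas i) measurableSet_Iic
  have mSum : Measurable fun ω => ∑ i, X i ω :=
    Finset.measurable_sum _ fun i _ => hmeas i
  have mSle : ∀ x : ℝ, MeasurableSet {ω | (∑ i, X i ω) ≤ x} := fun x =>
    mSum measurableSet_Iic
  -- basic facts about F
  have hFle1 : ∀ x, F x ≤ 1 := by
    intro x
    rw [hF]
    have := prob_le_one (μ := (ℙ : Measure Ω)) (s := {ω | X i0 ω ≤ x})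
    simpa using ENNReal.toReal_mono ENNReal.one_ne_top this
  have hF0 : ∀ x, 0 ≤ F x := fun x => by rw [hF]; exact ENNReal.toReal_nonneg
  have hFmono : Monotone F := by
    intro x y hxy
    rw [hF, hF]
    exact ENNReal.toReal_mono (measure_ne_top _ _)
      (measure_mono fun ω h => le_trans h hxy)
  have hcomplF : ∀ (i : Fin n) (x : ℝ), {ω : Ω | x < X i ω} = {ω : Ω | X i ω ≤ x}ᶜ := by
    intro i x; ext ω; simp [not_le]
  have htail : ∀ (i : Fin n) (x : ℝ), (ℙ {ω | x < X i ω}).toReal = 1 - F x := by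
    intro i x
    rw [hcomplF, prob_compl_eq_one_sub (mIic i x), hident i x,
      ENNReal.toReal_sub_of_le prob_le_one ENNReal.one_ne_top, hF]
    simp
  have htailE : ∀ (i : Fin n) (x : ℝ), ℙ {ω | x < X i ω} = ℙ {ω | x < X i0 ω} := by
    intro i x
    rw [hcomplF, hcomplF, prob_compl_eq_one_sub (mIic i x),
      prob_compl_eq_one_sub (mIic i0 x), hident i x]
  have hFneg : ∀ x < (0:ℝ), F x = 0 := by
    intro x hx
    rw [hF]
    have : {ω : Ω | X i0 ω ≤ x} = ∅ := by
      ext ω; simp only [mem_setOf_eq, mem_empty_iff_false, iff_false, not_le]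
      exact lt_of_lt_of_le hx (hnonneg i0 ω)
    rw [this]; simp
  -- F x < 1 for all x
  have hFlt1 : ∀ x, F x < 1 := by
    intro x
    rcases lt_or_ge (F x) 1 with h | h
    · exact h
    exfalso
    have hx1 : F x = 1 := le_antisymm (hFle1 x) h
    have hconst : ∀ t, max x 0 ≤ t → (1 - F (t * 2)) / (1 - F t) = 0 := by
      intro t ht
      have ht0 : (0:ℝ) ≤ t := le_trans (le_max_right _ _) ht
      have htx : x ≤ t := le_trans (le_max_left _ _) ht
      have h1 : F t = 1 := le_antisymm (hFle1 t) (hx1 ▸ hFmono htx)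
      have h2 : F (t * 2) = 1 := le_antisymm (hFle1 _)
        (hx1 ▸ hFmono (le_trans htx (by nlinarith)))
      rw [h1, h2]; simp
    have hzero : Tendsto (fun t => (1 - F (t * 2)) / (1 - F t)) atTop (𝓝 0) :=
      Tendsto.congr' (by filter_upwards [eventually_ge_atTop (max x 0)] with t ht
        using (hconst t ht).symm) tendsto_const_nhds
    have huniq := tendsto_nhds_unique hzero (hRV 2 two_pos)
    have hpos : (0:ℝ) < (2:ℝ) ^ (-1/ξ) := Real.rpow_pos_of_pos two_pos _
    rw [← huniq] at hpos
    linarith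
  have hFbarpos : ∀ x, 0 < 1 - F x := fun x => by linarith [hFlt1 x]
  have hFbarne : ∀ x, 1 - F x ≠ 0 := fun x => (hFbarpos x).ne'
  -- F tends to 1 at infinity
  have hFbar_anti : Antitone fun t => 1 - F t := fun a b hab => by
    simp only; linarith [hFmono hab]
  have hFbar_bdd : BddBelow (range fun t => 1 - F t) := by
    refine ⟨0, ?_⟩
    rintro y ⟨t, rfl⟩
    simp only
    linarith [hFle1 t]
  have hFbar_lim := tendsto_atTop_ciInf hFbar_anti hFbar_bdd
  set L0 : ℝ := ⨅ t : ℝ, (1 - F t) with hL0def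
  have hL0nonneg : 0 ≤ L0 := le_ciInf fun t => by linarith [hFle1 t]
  have hL0 : L0 = 0 := by
    by_contra hL
    have hLpos : 0 < L0 := lt_of_le_of_ne hL0nonneg (Ne.symm hL)
    have hcomp : Tendsto (fun t : ℝ => 1 - F (t * 2)) atTop (𝓝 L0) :=
      hFbar_lim.comp (tendsto_id.atTop_mul_const two_pos)
    have h1 : Tendsto (fun t => (1 - F (t * 2)) / (1 - F t)) atTop (𝓝 (L0 / L0)) :=
      hcomp.div hFbar_lim hLpos.ne'
    rw [div_self hLpos.ne'] at h1
    have huniq := tendsto_nhds_unique h1 (hRV 2 two_pos)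
    have hlt : (2:ℝ) ^ (-1/ξ) < 1 :=
      Real.rpow_lt_one_of_one_lt_of_neg one_lt_two
        (by rw [neg_div]; exact neg_neg_iff_pos.mpr (by positivity))
    rw [← huniq] at hlt
    linarith
  have hFbar0 : Tendsto (fun t => 1 - F t) atTop (𝓝 0) := hL0 ▸ hFbar_lim
  have hFtop : Tendsto F atTop (𝓝 1) := by
    have h := (tendsto_const_nhds (α := ℝ) (f := atTop (α := ℝ)) (x := (1:ℝ))).sub hFbar0
    simpa using h
  -- quantile of F
  set q : ℝ → ℝ := fun α => sInf {x : ℝ | α ≤ F x} with hqdef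
  have hSne : ∀ α : ℝ, α < 1 → {x : ℝ | α ≤ F x}.Nonempty := by
    intro α hα
    obtain ⟨x, hx⟩ := (hFtop.eventually (eventually_ge_nhds hα)).exists
    exact ⟨x, hx⟩
  have hSbdd : ∀ α : ℝ, 0 < α → BddBelow {x : ℝ | α ≤ F x} := by
    intro α hα
    refine ⟨0, fun x hx => ?_⟩
    by_contra h
    push_neg at h
    rw [mem_setOf_eq, hFneg x h] at hx
    linarith
  have hFq : ∀ α : ℝ, 0 < α → α < 1 → F (q α) = α := by
    intro α hα0 hα1
    have hclosed : IsClosed {x : ℝ | α ≤ F x} := isClosed_le continuous_const hcont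
    have hmem : q α ∈ {x : ℝ | α ≤ F x} :=
      hclosed.csInf_mem (hSne α hα1) (hSbdd α hα0)
    refine le_antisymm ?_ hmem
    have hev : ∀ᶠ x in 𝓝[<] (q α), F x ≤ α := by
      filter_upwards [self_mem_nhdsWithin] with x hx
      have hnm : x ∉ {y : ℝ | α ≤ F y} := notMem_of_lt_csInf hx (hSbdd α hα0)
      rw [mem_setOf_eq] at hnm; linarith
    exact le_of_tendsto ((hcont.tendsto (q α)).mono_left nhdsWithin_le_nhds) hev
  have hIoo : Ioo (0:ℝ) 1 ∈ 𝓝[<] (1:ℝ) :=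
    Ioo_mem_nhdsLT_of_mem (by constructor <;> norm_num)
  have hq_top : Tendsto q (𝓝[<] (1:ℝ)) atTop := by
    rw [tendsto_atTop]
    intro M
    have hb : max (F M) 0 < 1 := by
      rcases max_cases (F M) 0 with ⟨h, _⟩ | ⟨h, _⟩ <;> rw [h]
      · exact hFlt1 M
      · norm_num
    have hmem : Ioo (max (F M) 0) 1 ∈ 𝓝[<] (1:ℝ) :=
      Ioo_mem_nhdsLT_of_mem ⟨hb, le_refl _⟩
    filter_upwards [hmem] with α hα
    have hα0 : 0 < α := lt_of_le_of_lt (le_max_right _ _) hα.1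
    have hFM : F M < α := lt_of_le_of_lt (le_max_left _ _) hα.1
    by_contra h
    push_neg at h
    have hle := hFmono h.le
    rw [hFq α hα0 hα.2] at hle
    linarith
  -- basic facts about G
  have hG0 : ∀ x, 0 ≤ G x := fun x => by rw [hG]; exact ENNReal.toReal_nonneg
  have hGmono : Monotone G := by
    intro x y hxy
    rw [hG, hG]
    exact ENNReal.toReal_mono (measure_ne_top _ _)
      (measure_mono fun ω h => le_trans h hxy)
  have hGneg : ∀ x < (0:ℝ), G x = 0 := by
    intro x hx
    rw [hG]
    have : {ω : Ω | (∑ i, X i ω) ≤ x} = ∅ := by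
      ext ω; simp only [mem_setOf_eq, mem_empty_iff_false, iff_false, not_le]
      exact lt_of_lt_of_le hx (Finset.sum_nonneg fun i _ => hnonneg i ω)
    rw [this]; simp
  have hGtail : ∀ x : ℝ, (ℙ {ω | x < (∑ i, X i ω)}).toReal = 1 - G x := by
    intro x
    have hc : {ω : Ω | x < ∑ i, X i ω} = {ω : Ω | (∑ i, X i ω) ≤ x}ᶜ := by
      ext ω; simp [not_le]
    rw [hc, prob_compl_eq_one_sub (mSle x),
      ENNReal.toReal_sub_of_le prob_le_one ENNReal.one_ne_top, hG]
    simp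
  -- G ≤ F^n via independence
  have hGpow : ∀ t : ℝ, G t ≤ F t ^ n := by
    intro t
    have hincl : {ω : Ω | (∑ i, X i ω) ≤ t} ⊆ ⋂ i, {ω : Ω | X i ω ≤ t} := by
      intro ω hω
      rw [mem_iInter]
      intro i
      exact le_trans (Finset.single_le_sum (fun j _ => hnonneg j ω) (Finset.mem_univ i)) hω
    have hprod : ℙ (⋂ i, {ω : Ω | X i ω ≤ t}) = ∏ i : Fin n, ℙ {ω : Ω | X i ω ≤ t} :=
      hindep.meas_iInter fun i => ⟨Iic t, measurableSet_Iic, rfl⟩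
    have hpow : ℙ (⋂ i, {ω : Ω | X i ω ≤ t}) = (ℙ {ω : Ω | X i0 ω ≤ t}) ^ n := by
      rw [hprod, Finset.prod_congr rfl fun i _ => hident i t]
      simp [Finset.card_univ]
    calc G t = (ℙ {ω : Ω | (∑ i, X i ω) ≤ t}).toReal := by rw [hG]
      _ ≤ (ℙ (⋂ i, {ω : Ω | X i ω ≤ t})).toReal :=
        ENNReal.toReal_mono (measure_ne_top _ _) (measure_mono hincl)
      _ = F t ^ n := by rw [hpow, ENNReal.toReal_pow, ← hF]
  -- lower tail bound
  have hlow : ∀ t : ℝ, (∑ k ∈ Finset.range n, F t ^ k) ≤ (1 - G t) / (1 - F t) := by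
    intro t
    rw [le_div_iff₀ (hFbarpos t)]
    have hgeom : (∑ k ∈ Finset.range n, F t ^ k) * (1 - F t) = 1 - F t ^ n := by
      have hg := geom_sum_mul (F t) n
      nlinarith [hg]
    rw [hgeom]
    nlinarith [hGpow t]
  have hlow_lim : Tendsto (fun t => ∑ k ∈ Finset.range n, F t ^ k) atTop (𝓝 n) := by
    have h : Tendsto (fun t => ∑ k ∈ Finset.range n, F t ^ k) atTop
        (𝓝 (∑ k ∈ Finset.range n, (1:ℝ) ^ k)) :=
      tendsto_finset_sum _ fun k _ => hFtop.pow k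
    simpa using h
  -- upper tail bound via inclusion
  have hup : ∀ δ : ℝ, 0 < δ → δ < 1 → ∀ t : ℝ, 0 < t →
      1 - G t ≤ n * (1 - F (t * (1 - δ))) +
        n^2 * ((1 - F (t * (δ/n))) * (1 - F (t * (δ/n)))) := by
    intro δ hδ0 hδ1 t ht
    set A : Fin n → Set Ω := fun i => {ω | t * (1 - δ) < X i ω} with hA
    set B : Fin n → Set Ω := fun i => {ω | t * (δ/n) < X i ω} with hB
    have hincl : {ω : Ω | t < ∑ i, X i ω} ⊆
        (⋃ i, A i) ∪ (⋃ i, ⋃ j, ⋃ (_ : i ≠ j), B i ∩ B j) := by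
      intro ω hω
      rw [mem_setOf_eq] at hω
      by_cases hA' : ∃ i, t * (1 - δ) < X i ω
      · exact Or.inl (mem_iUnion.2 ⟨hA'.choose, hA'.choose_spec⟩)
      push_neg at hA'
      right
      obtain ⟨i, -, hi⟩ := Finset.exists_max_image Finset.univ (fun i => X i ω)
        Finset.univ_nonempty
      have hsum_le : (∑ j, X j ω) ≤ n * X i ω := by
        have h := Finset.sum_le_card_nsmul Finset.univ (fun j => X j ω) (X i ω)
          (fun j _ => hi j (Finset.mem_univ j))
        simpa [Finset.card_univ, nsmul_eq_mul] using h
      have hXi : t * (δ/n) < X i ω := by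
        rw [← mul_div_assoc, div_lt_iff₀ hn0]
        nlinarith [lt_of_lt_of_le hω hsum_le]
      have herase : t * δ < ∑ j ∈ Finset.univ.erase i, X j ω := by
        have he := Finset.sum_erase_add Finset.univ (fun j => X j ω) (Finset.mem_univ i)
        have hXile : X i ω ≤ t * (1 - δ) := hA' i
        nlinarith [hω]
      have hne : (Finset.univ.erase i).Nonempty := by
        rw [← Finset.card_pos, Finset.card_erase_of_mem (Finset.mem_univ i),
          Finset.card_univ, Fintype.card_fin]
        omega
      obtain ⟨j, hjmem, hj⟩ := Finset.exists_max_image _ (fun j => X j ω) hne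
      have hji : j ≠ i := Finset.ne_of_mem_erase hjmem
      have hsum_le2 : (∑ k ∈ Finset.univ.erase i, X k ω) ≤ ((n - 1 : ℕ) : ℝ) * X j ω := by
        have h := Finset.sum_le_card_nsmul (Finset.univ.erase i) (fun k => X k ω) (X j ω) hj
        simpa [Finset.card_erase_of_mem, Finset.card_univ, nsmul_eq_mul] using h
      have hXj : t * (δ/n) < X j ω := by
        have h2 : t * δ < ((n - 1 : ℕ) : ℝ) * X j ω := lt_of_lt_of_le herase hsum_le2
        have hXj0 : 0 ≤ X j ω := hnonneg j ω
        have hcast : ((n - 1 : ℕ) : ℝ) ≤ n := by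
          exact_mod_cast Nat.sub_le n 1
        have h3 : t * δ < n * X j ω := lt_of_lt_of_le h2 (by nlinarith)
        rw [← mul_div_assoc, div_lt_iff₀ hn0]
        nlinarith
      exact mem_iUnion.2 ⟨i, mem_iUnion.2 ⟨j, mem_iUnion.2 ⟨Ne.symm hji, hXi, hXj⟩⟩⟩
    -- measure computation
    set τ₁ : ℝ≥0∞ := ℙ {ω | t * (1 - δ) < X i0 ω} with hτ₁
    set τ₂ : ℝ≥0∞ := ℙ {ω | t * (δ/n) < X i0 ω} with hτ₂
    have hpair : ∀ i j : Fin n, ℙ (⋃ (_ : i ≠ j), B i ∩ B j) ≤ τ₂ * τ₂ := by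
      intro i j
      by_cases hij : i = j
      · simp [hij]
      · have hijne : i ≠ j := hij
        have hrw : (⋃ (_ : i ≠ j), B i ∩ B j) = B i ∩ B j := by
          simp [hijne]
        rw [hrw]
        have hind := hindep.indepFun hijne
        have heq : ℙ (B i ∩ B j) = ℙ (B i) * ℙ (B j) :=
          hind.measure_inter_preimage_eq_mul _ _ measurableSet_Ioi measurableSet_Ioi
        rw [heq]
        have e1 : ℙ (B i) = τ₂ := htailE i _
        have e2 : ℙ (B j) = τ₂ := htailE j _
        rw [e1, e2]
    have hmeasure : ℙ {ω | t < ∑ i, X i ω} ≤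
        (n : ℝ≥0∞) * τ₁ + (n : ℝ≥0∞)^2 * (τ₂ * τ₂) := by
      calc ℙ {ω | t < ∑ i, X i ω}
          ≤ ℙ ((⋃ i, A i) ∪ (⋃ i, ⋃ j, ⋃ (_ : i ≠ j), B i ∩ B j)) := measure_mono hincl
        _ ≤ ℙ (⋃ i, A i) + ℙ (⋃ i, ⋃ j, ⋃ (_ : i ≠ j), B i ∩ B j) := measure_union_le _ _
        _ ≤ (∑ i : Fin n, ℙ (A i)) +
            ∑ i : Fin n, ∑ j : Fin n, ℙ (⋃ (_ : i ≠ j), B i ∩ B j) := by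
            gcongr
            · exact measure_iUnion_fintype_le _ _
            · exact le_trans (measure_iUnion_fintype_le _ _)
                (Finset.sum_le_sum fun i _ => measure_iUnion_fintype_le _ _)
        _ ≤ (∑ _i : Fin n, τ₁) + ∑ _i : Fin n, ∑ _j : Fin n, τ₂ * τ₂ := by
            gcongr with i _ i _ j _
            · exact le_of_eq (htailE i _)
            · exact hpair i j
        _ = (n : ℝ≥0∞) * τ₁ + (n : ℝ≥0∞)^2 * (τ₂ * τ₂) := by
            simp [Finset.sum_const, Finset.card_univ, nsmul_eq_mul]
            ring
    have hfin : ((n : ℝ≥0∞) * τ₁ + (n : ℝ≥0∞)^2 * (τ₂ * τ₂)) ≠ ⊤ := by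
      apply ENNReal.add_ne_top.2
      constructor
      · exact ENNReal.mul_ne_top (ENNReal.natCast_ne_top n) (measure_ne_top _ _)
      · exact ENNReal.mul_ne_top (ENNReal.pow_ne_top (ENNReal.natCast_ne_top n))
          (ENNReal.mul_ne_top (measure_ne_top _ _) (measure_ne_top _ _))
    have hto := ENNReal.toReal_mono hfin hmeasure
    rw [hGtail t] at hto
    refine le_trans hto (le_of_eq ?_)
    rw [ENNReal.toReal_add (ENNReal.mul_ne_top (ENNReal.natCast_ne_top n) (measure_ne_top _ _))
        (ENNReal.mul_ne_top (ENNReal.pow_ne_top (ENNReal.natCast_ne_top n))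
          (ENNReal.mul_ne_top (measure_ne_top _ _) (measure_ne_top _ _)))]
    simp only [ENNReal.toReal_mul, ENNReal.toReal_pow, ENNReal.toReal_natCast, hτ₁, hτ₂]
    rw [htail i0, htail i0]
  -- eventual upper bound on the tail ratio
  have hubound : ∀ ε : ℝ, 0 < ε → ∀ᶠ t in atTop, (1 - G t) / (1 - F t) < n + ε := by
    intro ε hε
    obtain ⟨δ, hδmem, hδval⟩ : ∃ δ : ℝ, δ ∈ Ioo (0:ℝ) 1 ∧
        (n:ℝ) * (1 - δ) ^ (-1/ξ) < n + ε/2 := by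
      have hcont1 : Tendsto (fun δ : ℝ => (n:ℝ) * (1 - δ) ^ (-1/ξ)) (𝓝 0)
          (𝓝 ((n:ℝ) * (1:ℝ) ^ (-1/ξ))) := by
        apply Tendsto.const_mul
        have hc : ContinuousAt (fun y : ℝ => y ^ (-1/ξ)) 1 :=
          Real.continuousAt_rpow_const 1 _ (Or.inl one_ne_zero)
        have hl : Tendsto (fun δ : ℝ => 1 - δ) (𝓝 0) (𝓝 1) := by
          have hcs : Continuous fun δ : ℝ => 1 - δ := continuous_const.sub continuous_id
          simpa using hcs.tendsto 0
        exact hc.tendsto.comp hl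
      rw [Real.one_rpow, mul_one] at hcont1
      have hev : ∀ᶠ δ in 𝓝 (0:ℝ), (n:ℝ) * (1 - δ) ^ (-1/ξ) < n + ε/2 :=
        hcont1.eventually (eventually_lt_nhds (by linarith))
      have hev2 : ∀ᶠ δ in 𝓝[>] (0:ℝ),
          ((n:ℝ) * (1 - δ) ^ (-1/ξ) < n + ε/2 ∧ δ ∈ Ioo (0:ℝ) 1) := by
        filter_upwards [hev.filter_mono nhdsWithin_le_nhds,
          Ioo_mem_nhdsGT_of_mem (show (0:ℝ) ∈ Ico (0:ℝ) 1 by constructor <;> norm_num)]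
          with δ h1 h2
        exact ⟨h1, h2⟩
      obtain ⟨δ, h1, h2⟩ := hev2.exists
      exact ⟨δ, h2, h1⟩
    have hδ0 := hδmem.1
    have hδ1 := hδmem.2
    have hr1 : Tendsto (fun t => (1 - F (t * (1 - δ))) / (1 - F t)) atTop
        (𝓝 ((1 - δ) ^ (-1/ξ))) := hRV _ (by linarith)
    have hc2 : (0:ℝ) < δ / n := by positivity
    have hr2a : Tendsto (fun t : ℝ => 1 - F (t * (δ/n))) atTop (𝓝 0) :=
      hFbar0.comp (tendsto_id.atTop_mul_const hc2)
    have hr2b : Tendsto (fun t => (1 - F (t * (δ/n))) / (1 - F t)) atTop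
        (𝓝 ((δ/n) ^ (-1/ξ))) := hRV _ hc2
    have hRHS : Tendsto (fun t => (n:ℝ) * ((1 - F (t * (1 - δ))) / (1 - F t)) +
        (n:ℝ)^2 * ((1 - F (t * (δ/n))) * ((1 - F (t * (δ/n))) / (1 - F t)))) atTop
        (𝓝 ((n:ℝ) * (1 - δ) ^ (-1/ξ) + (n:ℝ)^2 * (0 * (δ/n) ^ (-1/ξ)))) :=
      (hr1.const_mul _).add ((hr2a.mul hr2b).const_mul _)
    rw [zero_mul, mul_zero, add_zero] at hRHS
    have hevRHS : ∀ᶠ t in atTop, (n:ℝ) * ((1 - F (t * (1 - δ))) / (1 - F t)) +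
        (n:ℝ)^2 * ((1 - F (t * (δ/n))) * ((1 - F (t * (δ/n))) / (1 - F t))) < n + ε :=
      hRHS.eventually (eventually_lt_nhds (by linarith))
    filter_upwards [hevRHS, eventually_gt_atTop (0:ℝ)] with t hlt ht
    have h1 := hup δ hδ0 hδ1 t ht
    have h2 : (1 - G t) / (1 - F t) ≤ (n:ℝ) * ((1 - F (t * (1 - δ))) / (1 - F t)) +
        (n:ℝ)^2 * ((1 - F (t * (δ/n))) * ((1 - F (t * (δ/n))) / (1 - F t))) := by
      calc (1 - G t) / (1 - F t)
          ≤ ((n:ℝ) * (1 - F (t * (1 - δ))) +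
            (n:ℝ)^2 * ((1 - F (t * (δ/n))) * (1 - F (t * (δ/n))))) / (1 - F t) := by
            gcongr
            exact (hFbarpos t).le
        _ = (n:ℝ) * ((1 - F (t * (1 - δ))) / (1 - F t)) +
            (n:ℝ)^2 * ((1 - F (t * (δ/n))) * ((1 - F (t * (δ/n))) / (1 - F t))) := by
            rw [add_div, mul_div_assoc, mul_div_assoc, mul_div_assoc]
    exact lt_of_le_of_lt h2 hlt
  -- the tail equivalence
  have T : Tendsto (fun t => (1 - G t) / (1 - F t)) atTop (𝓝 n) := by
    rw [Metric.tendsto_nhds]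
    intro ε hε
    have hu := hubound ε hε
    have hl : ∀ᶠ t in atTop, (n:ℝ) - ε < ∑ k ∈ Finset.range n, F t ^ k :=
      hlow_lim.eventually (eventually_gt_nhds (by linarith))
    filter_upwards [hu, hl] with t h1 h2
    rw [Real.dist_eq, abs_sub_lt_iff]
    constructor
    · linarith
    · linarith [hlow t]
  -- G tends to 1 at infinity
  have hGbar0 : Tendsto (fun t => 1 - G t) atTop (𝓝 0) := by
    have hm := T.mul hFbar0
    rw [mul_zero] at hm
    refine Tendsto.congr (fun t => ?_) hm
    exact div_mul_cancel₀ _ (hFbarne t)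
  have hGtop : Tendsto G atTop (𝓝 1) := by
    have h := (tendsto_const_nhds (α := ℝ) (f := atTop (α := ℝ)) (x := (1:ℝ))).sub hGbar0
    simpa using h
  have hGSne : ∀ α : ℝ, α < 1 → {x : ℝ | α ≤ G x}.Nonempty := by
    intro α hα
    obtain ⟨x, hx⟩ := (hGtop.eventually (eventually_ge_nhds hα)).exists
    exact ⟨x, hx⟩
  have hGSbdd : ∀ α : ℝ, 0 < α → BddBelow {x : ℝ | α ≤ G x} := by
    intro α hα
    refine ⟨0, fun x hx => ?_⟩
    by_contra h
    push_neg at h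
    rw [mem_setOf_eq, hGneg x h] at hx
    linarith
  -- the key composed limit
  have key : ∀ c : ℝ, 0 < c →
      Tendsto (fun t => (1 - G (t * c)) / (1 - F t)) atTop (𝓝 ((n:ℝ) * c ^ (-1/ξ))) := by
    intro c hc
    have h1 : Tendsto (fun t : ℝ => (1 - G (t * c)) / (1 - F (t * c))) atTop (𝓝 n) :=
      T.comp (tendsto_id.atTop_mul_const hc)
    have h2 := hRV c hc
    have h3 := h1.mul h2
    refine Tendsto.congr (fun t => ?_) h3
    rw [div_mul_div_comm, mul_comm (1 - F (t * c)) (1 - F t),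
      mul_div_mul_right _ _ (hFbarne (t * c))]
  -- eventual upper bound on the quantile of G
  have keyA : ∀ c : ℝ, 0 < c → (n:ℝ) * c ^ (-1/ξ) < 1 →
      ∀ᶠ α in 𝓝[<] (1:ℝ), sInf {x : ℝ | α ≤ G x} ≤ c * q α := by
    intro c hc hlt
    have hev : ∀ᶠ t in atTop, (1 - G (t * c)) / (1 - F t) < 1 :=
      (key c hc).eventually (eventually_lt_nhds hlt)
    filter_upwards [hq_top.eventually hev, hIoo] with α h1 h2
    rw [div_lt_one (hFbarpos (q α)), hFq α h2.1 h2.2] at h1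
    have hmem : q α * c ∈ {x : ℝ | α ≤ G x} := by
      rw [mem_setOf_eq]; linarith
    calc sInf {x : ℝ | α ≤ G x} ≤ q α * c := csInf_le (hGSbdd α h2.1) hmem
      _ = c * q α := mul_comm _ _
  -- eventual lower bound on the quantile of G
  have keyB : ∀ c : ℝ, 0 < c → 1 < (n:ℝ) * c ^ (-1/ξ) →
      ∀ᶠ α in 𝓝[<] (1:ℝ), c * q α ≤ sInf {x : ℝ | α ≤ G x} := by
    intro c hc hlt
    have hev : ∀ᶠ t in atTop, 1 < (1 - G (t * c)) / (1 - F t) :=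
      (key c hc).eventually (eventually_gt_nhds hlt)
    filter_upwards [hq_top.eventually hev, hIoo] with α h1 h2
    rw [lt_div_iff₀ (hFbarpos (q α)), hFq α h2.1 h2.2, one_mul] at h1
    have hGlt : G (q α * c) < α := by linarith
    apply le_csInf (hGSne α h2.2)
    intro x hx
    rw [mem_setOf_eq] at hx
    by_contra hxc
    push_neg at hxc
    have hle : G x ≤ G (q α * c) := hGmono (by rw [mul_comm]; linarith)
    linarith
  -- final assembly
  rw [Metric.tendsto_nhds]
  intro ε hε
  set L : ℝ := (n:ℝ) ^ ξ with hLdef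
  have hLpos : 0 < L := Real.rpow_pos_of_pos hn0 _
  have hexp : -1/ξ < 0 := by rw [neg_div]; exact neg_neg_iff_pos.mpr (by positivity)
  have hLinv : L ^ (-1/ξ) = 1/n := by
    rw [hLdef, ← Real.rpow_mul hn0.le]
    have he : ξ * (-1/ξ) = -1 := by field_simp
    rw [he, Real.rpow_neg_one, one_div]
  set c₂ : ℝ := L + n * ε / 2 with hc₂def
  have hc₂ : L < c₂ := by
    have hp : 0 < (n:ℝ) * ε / 2 := by positivity
    rw [hc₂def]; linarith
  have hc₂pos : 0 < c₂ := hLpos.trans hc₂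
  have hc₂lt : (n:ℝ) * c₂ ^ (-1/ξ) < 1 := by
    have h := Real.rpow_lt_rpow_of_neg hLpos hc₂ hexp
    rw [hLinv] at h
    calc (n:ℝ) * c₂ ^ (-1/ξ) < n * (1/n) := mul_lt_mul_of_pos_left h hn0
      _ = 1 := by field_simp
  set m : ℝ := min (L/2) ((n:ℝ) * ε / 2) with hmdef
  have hmpos : 0 < m := lt_min (by positivity) (by positivity)
  set c₁ : ℝ := L - m with hc₁def
  have hc₁pos : 0 < c₁ := by
    have hm2 : m ≤ L/2 := min_le_left _ _
    rw [hc₁def]; linarith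
  have hc₁lt : c₁ < L := by rw [hc₁def]; linarith
  have hc₁gt : 1 < (n:ℝ) * c₁ ^ (-1/ξ) := by
    have h := Real.rpow_lt_rpow_of_neg hc₁pos hc₁lt hexp
    rw [hLinv] at h
    calc (1:ℝ) = n * (1/n) := by field_simp
      _ < n * c₁ ^ (-1/ξ) := mul_lt_mul_of_pos_left h hn0
  filter_upwards [keyA c₂ hc₂pos hc₂lt, keyB c₁ hc₁pos hc₁gt,
    hq_top.eventually (eventually_ge_atTop (1:ℝ))] with α hA hB hq1
  have hqpos : 0 < q α := lt_of_lt_of_le one_pos hq1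
  have hnq : 0 < (n:ℝ) * q α := by positivity
  have hub2 : sInf {x : ℝ | α ≤ G x} / ((n:ℝ) * q α) ≤ c₂ / n := by
    rw [div_le_div_iff₀ hnq hn0]
    nlinarith
  have hlb2 : c₁ / n ≤ sInf {x : ℝ | α ≤ G x} / ((n:ℝ) * q α) := by
    rw [div_le_div_iff₀ hn0 hnq]
    nlinarith
  have hLn : (n:ℝ) ^ (ξ - 1) = L / n := by
    rw [hLdef, Real.rpow_sub hn0, Real.rpow_one]
  rw [Real.dist_eq, hLn, abs_sub_lt_iff]
  have hc2n : c₂ / n = L / n + ε/2 := by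
    rw [hc₂def]; field_simp
  have hmn : m / n ≤ ε / 2 := by
    rw [div_le_iff₀ hn0]
    calc m ≤ (n:ℝ) * ε / 2 := min_le_right _ _
      _ = ε / 2 * n := by ring
  have hc1n : c₁ / n = L/n - m/n := by rw [hc₁def]; ring
  constructor
  · rw [hc2n] at hub2; linarith
  · rw [hc1n] at hlb2; linarith
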